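/- Let Ω ⊂ ℝ² be open and bounded, let H be a C¹ real-valued function on a neighborhood of cl(Ω) and set b = (∂H/∂x₂, −∂H/∂x₁). Let λ, ε, ν > 0, M ≥ 0, and g : ∂Ω → ℝ continuous. Let u : cl(Ω) → ℝ be bounded, upper semicontinuous, and a viscosity subsolution of λu − ε⁻¹ b·Du + ν|Du| − M = 0 in Ω together with the Dirichlet condition u = g on ∂Ω in the viscosity sense (that is: in the interior, λu(z) − ε⁻¹ b(z)·Dφ(z) + ν|Dφ(z)| − M ≤ 0 at every local maximum point z ∈ Ω of u − φ with φ ∈ C¹; and at every local maximum point z ∈ ∂Ω of u − φ with φ ∈ C¹(cl(Ω)), min{λu(z) − ε⁻¹ b(z)·Dφ(z) + ν|Dφ(z)| − M, u(z) − g(z)} ≤ 0). Let y ∈ ∂Ω and suppose there exist r > 0 and h̄ ∈ ℝ such that H(y) = h̄, H(x) < h̄ for all x ∈ B_r(y) ∩ Ω, and inf{|DH(x)| : x ∈ B_r(y) ∩ cl(Ω)} > 0. Then u(y) ≤ g(y). -/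

import Mathlib

open Filter Topology Set Metric Bornology

noncomputable section

/-- The plane `ℝ²` as a Euclidean space. -/
abbrev E2 : Type := EuclideanSpace ℝ (Fin 2)

/-- The Hamiltonian vector field `b = (∂H/∂x₂, −∂H/∂x₁)` of `H`. -/
def hamVF (H : E2 → ℝ) (x : E2) : E2 :=
  (WithLp.equiv 2 (Fin 2 → ℝ)).symm
    ![fderiv ℝ H x (EuclideanSpace.single 1 1), -(fderiv ℝ H x (EuclideanSpace.single 0 1))]

/-- An upper semicontinuous function on a nonempty compact set attains its maximum. -/
lemma usc_exists_max {α : Type*} [TopologicalSpace α] {S : Set α} (hS : IsCompact S)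
    (hne : S.Nonempty) {f : α → ℝ} (hf : UpperSemicontinuousOn f S) :
    ∃ z ∈ S, ∀ x ∈ S, f x ≤ f z := by
  by_contra hcon
  push_neg at hcon
  choose w hwS hwlt using hcon
  have key : ∀ z (hz : z ∈ S), ∃ U : Set α, IsOpen U ∧ z ∈ U ∧
      ∀ x ∈ U ∩ S, f x < f (w z hz) := by
    intro z hz
    have h := hf z hz (f (w z hz)) (hwlt z hz)
    rw [eventually_nhdsWithin_iff] at h
    obtain ⟨U, hUsub, hUo, hzU⟩ := eventually_nhds_iff.mp h
    exact ⟨U, hUo, hzU, fun x hx => hUsub x hx.1 hx.2⟩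
  choose U hUo hzU hUlt using key
  obtain ⟨t, ht⟩ := hS.elim_nhds_subcover' U (fun z hz => (hUo z hz).mem_nhds (hzU z hz))
  have htne : t.Nonempty := by
    obtain ⟨x, hx⟩ := hne
    obtain ⟨z, hz, _⟩ := Set.mem_iUnion₂.mp (ht hx)
    exact ⟨z, hz⟩
  obtain ⟨z₀, hz₀t, hz₀max⟩ := t.exists_max_image (fun z => f (w z.1 z.2)) htne
  have hpS : w z₀.1 z₀.2 ∈ S := hwS _ _
  obtain ⟨z₁, hz₁, hpU⟩ := Set.mem_iUnion₂.mp (ht hpS)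
  have h1 : f (w z₀.1 z₀.2) < f (w z₁.1 z₁.2) := hUlt z₁.1 z₁.2 _ ⟨hpU, hpS⟩
  exact absurd (h1.trans_le (hz₀max z₁ hz₁)) (lt_irrefl _)

lemma inner_gradient_eq (f : E2 → ℝ) (x v : E2) :
    (inner ℝ (gradient f x) v : ℝ) = fderiv ℝ f x v := by
  rw [gradient]
  exact InnerProductSpace.toDual_symm_apply

lemma e2_decomp (a b : ℝ) :
    (WithLp.equiv 2 (Fin 2 → ℝ)).symm ![a, b]
      = a • EuclideanSpace.single 0 1 + b • EuclideanSpace.single (1 : Fin 2) 1 := by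
  ext i
  fin_cases i <;> simp [EuclideanSpace.single_apply]

lemma hamVF_orth (H : E2 → ℝ) (z : E2) : fderiv ℝ H z (hamVF H z) = 0 := by
  rw [hamVF, e2_decomp, map_add, map_smul, map_smul]
  simp only [smul_eq_mul]
  ring

lemma hamVF_norm_le (H : E2 → ℝ) (z : E2) : ‖hamVF H z‖ ≤ 2 * ‖fderiv ℝ H z‖ := by
  rw [hamVF, e2_decomp]
  have h0 : ‖EuclideanSpace.single (0 : Fin 2) (1:ℝ)‖ = 1 := by
    simp [EuclideanSpace.norm_single]
  have h1 : ‖EuclideanSpace.single (1 : Fin 2) (1:ℝ)‖ = 1 := by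
    simp [EuclideanSpace.norm_single]
  calc ‖_ + _‖ ≤ ‖(fderiv ℝ H z (EuclideanSpace.single 1 1)) •
          EuclideanSpace.single (0:Fin 2) (1:ℝ)‖
        + ‖(-(fderiv ℝ H z (EuclideanSpace.single 0 1))) •
          EuclideanSpace.single (1:Fin 2) (1:ℝ)‖ :=
      norm_add_le _ _
    _ ≤ 2 * ‖fderiv ℝ H z‖ := by
      rw [norm_smul, norm_smul, h0, h1, mul_one, mul_one, norm_neg]
      have a0 := (fderiv ℝ H z).le_opNorm (EuclideanSpace.single (0:Fin 2) (1:ℝ))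
      have a1 := (fderiv ℝ H z).le_opNorm (EuclideanSpace.single (1:Fin 2) (1:ℝ))
      rw [h0, mul_one] at a0
      rw [h1, mul_one] at a1
      calc ‖fderiv ℝ H z (EuclideanSpace.single 1 1)‖
            + ‖fderiv ℝ H z (EuclideanSpace.single 0 1)‖
          ≤ ‖fderiv ℝ H z‖ + ‖fderiv ℝ H z‖ := add_le_add a1 a0
        _ = 2 * ‖fderiv ℝ H z‖ := by ring

lemma gradient_formula (K hbar : ℝ) (G : E2 → ℝ) (y z : E2) (hG : DifferentiableAt ℝ G z) :
    gradient (fun x => K * ((hbar - G x) + (inner ℝ (x - y) (x - y) : ℝ))) z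
      = K • (-(gradient G z) + (2:ℝ) • (z - y)) := by
  have h1 : HasFDerivAt (fun x : E2 => (inner ℝ (x - y) (x - y) : ℝ))
      ((fderivInnerCLM ℝ (z - y, z - y)).comp
        ((ContinuousLinearMap.id ℝ E2).prod (ContinuousLinearMap.id ℝ E2))) z := by
    have hid : HasFDerivAt (fun x : E2 => x - y) (ContinuousLinearMap.id ℝ E2) z :=
      (hasFDerivAt_id z).sub_const y
    exact hid.inner ℝ hid
  have h2 : HasFDerivAt (fun x => hbar - G x) (-(fderiv ℝ G z)) z :=
    hG.hasFDerivAt.const_sub hbar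
  have h3 : HasFDerivAt (fun x => K * ((hbar - G x) + (inner ℝ (x - y) (x - y) : ℝ)))
      (K • ((-(fderiv ℝ G z)) + _)) z := (h2.add h1).const_mul K
  rw [h3.hasGradientAt.gradient]
  apply (InnerProductSpace.toDual ℝ E2).injective
  rw [LinearIsometryEquiv.apply_symm_apply]
  ext v
  simp only [ContinuousLinearMap.coe_smul', Pi.smul_apply, ContinuousLinearMap.add_apply,
    ContinuousLinearMap.neg_apply, ContinuousLinearMap.coe_comp', Function.comp_apply,
    ContinuousLinearMap.prod_apply, ContinuousLinearMap.coe_id', id_eq, fderivInnerCLM_apply,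
    InnerProductSpace.toDual_apply_apply, inner_smul_left, inner_add_left, inner_neg_left,
    real_inner_smul_left, smul_eq_mul, map_mul, conj_trivial]
  have hg : (inner ℝ (gradient G z) v : ℝ) = fderiv ℝ G z v := by
    rw [gradient]; exact InnerProductSpace.toDual_symm_apply
  rw [hg, real_inner_comm v (z - y)]
  ring

set_option maxHeartbeats 1000000 in
/-- A bounded u.s.c. viscosity subsolution of
`λ u − ε⁻¹ b·Du + ν|Du| − M = 0` in `Ω` with the Dirichlet condition `u = g` on `∂Ω`
in the viscosity sense satisfies the boundary inequality `u(y) ≤ g(y)` classically at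
every boundary point `y` near which `H < H(y)` inside `Ω` and `|DH|` is bounded below. -/
theorem boundary_inequality_classical
    (Ω : Set E2) (hΩopen : IsOpen Ω) (hΩbdd : IsBounded Ω)
    (H : E2 → ℝ) (hH : ∃ V : Set E2, IsOpen V ∧ closure Ω ⊆ V ∧ ContDiffOn ℝ 1 H V)
    (lam ep ν M : ℝ) (hlam : 0 < lam) (hep : 0 < ep) (hν : 0 < ν) (hM : 0 ≤ M)
    (g : E2 → ℝ) (hg : ContinuousOn g (frontier Ω))
    (u : E2 → ℝ) (hub : ∃ C : ℝ, ∀ x ∈ closure Ω, |u x| ≤ C)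
    (hu : UpperSemicontinuousOn u (closure Ω))
    (husub : ∀ φ : E2 → ℝ, ContDiff ℝ 1 φ → ∀ z ∈ Ω,
      IsLocalMaxOn (fun x => u x - φ x) Ω z →
      lam * u z - ep⁻¹ * (inner ℝ (hamVF H z) (gradient φ z) : ℝ)
        + ν * ‖gradient φ z‖ - M ≤ 0)
    (hubc : ∀ φ : E2 → ℝ, ContDiff ℝ 1 φ → ∀ z ∈ frontier Ω,
      IsLocalMaxOn (fun x => u x - φ x) (closure Ω) z →
      min (lam * u z - ep⁻¹ * (inner ℝ (hamVF H z) (gradient φ z) : ℝ)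
          + ν * ‖gradient φ z‖ - M)
        (u z - g z) ≤ 0)
    (y : E2) (hy : y ∈ frontier Ω)
    (r : ℝ) (hr : 0 < r) (hbar : ℝ) (hyH : H y = hbar)
    (hlt : ∀ x ∈ ball y r ∩ Ω, H x < hbar)
    (hgrad : ∃ c : ℝ, 0 < c ∧ ∀ x ∈ ball y r ∩ closure Ω, c ≤ ‖gradient H x‖) :
    u y ≤ g y := by
  obtain ⟨V, hVo, hclV, hHV⟩ := hH
  obtain ⟨c, hc, hcgrad⟩ := hgrad
  obtain ⟨C, hC⟩ := hub
  have hyc : y ∈ closure Ω := frontier_subset_closure hy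
  have hC0 : 0 ≤ C := (abs_nonneg _).trans (hC y hyc)
  have hyV : y ∈ V := hclV hyc
  obtain ⟨ρV, hρV, hballV⟩ : ∃ ρ > 0, closedBall y ρ ⊆ V := by
    rcases Metric.nhds_basis_closedBall.mem_iff.mp (hVo.mem_nhds hyV) with ⟨ρ, hρ, h⟩
    exact ⟨ρ, hρ, h⟩
  set χ : ContDiffBump y := ⟨ρV/2, ρV, by linarith, by linarith⟩ with hχdef
  set G : E2 → ℝ := fun x => χ x * H x with hGdef
  have hGsmooth : ContDiff ℝ 1 G := by
    rw [contDiff_iff_contDiffAt]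
    intro x
    by_cases hx : x ∈ V
    · exact ((χ.contDiff (n := 1)).contDiffAt).mul (hHV.contDiffAt (hVo.mem_nhds hx))
    · have hx' : x ∈ (closedBall y ρV)ᶜ := fun h => hx (hballV h)
      have hzero : ∀ x' ∈ (closedBall y ρV)ᶜ, G x' = 0 := by
        intro x' hx'
        have hχ0 : χ x' = 0 := by
          rw [← Function.notMem_support, χ.support_eq]
          intro h; exact hx' (ball_subset_closedBall h)
        simp [hGdef, hχ0]
      exact (contDiffAt_const (c := 0)).congr_of_eventuallyEq
        (eventually_of_mem (isClosed_closedBall.isOpen_compl.mem_nhds hx')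
          (fun x' h => hzero x' h))
  have hGH : ∀ x ∈ closedBall y (ρV/2), G x = H x := fun x hx => by
    simp [hGdef, χ.one_of_mem_closedBall hx]
  have hfd : ∀ z ∈ ball y (ρV/2), fderiv ℝ G z = fderiv ℝ H z := by
    intro z hz
    apply Filter.EventuallyEq.fderiv_eq
    exact eventually_of_mem (isOpen_ball.mem_nhds hz)
      (fun x hx => hGH x (ball_subset_closedBall hx))
  have hgradGH : ∀ z ∈ ball y (ρV/2), gradient G z = gradient H z := by
    intro z hz; rw [gradient, gradient, hfd z hz]
  -- bound on the vector field near y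
  have hfc : ContinuousOn (fderiv ℝ H) V := hHV.continuousOn_fderiv_of_isOpen hVo le_rfl
  have hclcomp : IsCompact (closure Ω) := hΩbdd.isCompact_closure
  set t0 : ℝ := min (r/2) (ρV/4) with ht0def
  have ht0 : 0 < t0 := lt_min (by linarith) (by linarith)
  set T : Set E2 := closure Ω ∩ closedBall y t0 with hTdef
  have hTV : T ⊆ V := fun x hx => hclV hx.1
  have hTcomp : IsCompact T := hclcomp.inter_right isClosed_closedBall
  obtain ⟨B', hB'⟩ := hTcomp.exists_bound_of_continuousOn (hfc.mono hTV)
  set B : ℝ := 2 * max B' 0 with hBdef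
  have hB0 : 0 ≤ B := by positivity
  have hBbd : ∀ x ∈ T, ‖hamVF H x‖ ≤ B := by
    intro x hx
    refine (hamVF_norm_le H x).trans ?_
    have h1 : ‖fderiv ℝ H x‖ ≤ max B' 0 := le_trans (hB' x hx) (le_max_left _ _)
    rw [hBdef]; linarith
  set ρ₀ : ℝ := min (min t0 (c/8)) (ep*ν*c/(8*(B+1))) with hρ₀def
  have hρ₀ : 0 < ρ₀ := lt_min (lt_min ht0 (by linarith)) (by positivity)
  have hρ₀t0 : ρ₀ ≤ t0 := (min_le_left _ _).trans (min_le_left _ _)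
  have hρ₀c : ρ₀ ≤ c/8 := (min_le_left _ _).trans (min_le_right _ _)
  have hρ₀e : ρ₀ ≤ ep*ν*c/(8*(B+1)) := min_le_right _ _
  set S : Set E2 := closure Ω ∩ closedBall y ρ₀ with hSdef
  have hScomp : IsCompact S := hclcomp.inter_right isClosed_closedBall
  have hyS : y ∈ S := ⟨hyc, mem_closedBall_self hρ₀.le⟩
  have hSballr : S ⊆ ball y r := by
    intro x hx
    have := hx.2
    rw [mem_closedBall] at this
    rw [mem_ball]
    have h1 : t0 ≤ r/2 := min_le_left _ _
    linarith
  have hSballρV : S ⊆ ball y (ρV/2) := by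
    intro x hx
    have := hx.2
    rw [mem_closedBall] at this
    rw [mem_ball]
    have h1 : t0 ≤ ρV/4 := min_le_right _ _
    linarith
  have hHle : ∀ x ∈ closure Ω ∩ ball y r, H x ≤ hbar := by
    rintro x ⟨hx1, hx2⟩
    by_cases hxΩ : x ∈ Ω
    · exact (hlt x ⟨hx2, hxΩ⟩).le
    · have hxcl : x ∈ closure (ball y r ∩ Ω) := isOpen_ball.inter_closure ⟨hx2, hx1⟩
      haveI := mem_closure_iff_nhdsWithin_neBot.mp hxcl
      have hcontx : ContinuousWithinAt H (ball y r ∩ Ω) x :=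
        (hHV.continuousOn.continuousAt (hVo.mem_nhds (hclV hx1))).continuousWithinAt
      refine le_of_tendsto hcontx ?_
      filter_upwards [eventually_mem_nhdsWithin] with x' hx'
      exact (hlt x' hx').le
  have hSH : ∀ x ∈ S, H x ≤ hbar := fun x hx => hHle x ⟨hx.1, hSballr hx⟩
  -- reduction to u y ≤ g y + δ
  refine le_of_forall_pos_le_add (fun δ hδ => ?_)
  obtain ⟨s, hs, hgs⟩ := Metric.continuousWithinAt_iff.mp (hg y hy) δ hδ
  set m : ℝ := min ρ₀ s with hmdef
  have hm : 0 < m := lt_min hρ₀ hs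
  set K : ℝ := max (2*C/m^2 + 1) (4*(M + lam*C)/(ν*c) + 1) with hKdef
  have hK1 : 2*C/m^2 + 1 ≤ K := le_max_left _ _
  have hK2 : 4*(M + lam*C)/(ν*c) + 1 ≤ K := le_max_right _ _
  have hK0 : 0 < K := lt_of_lt_of_le (by positivity) hK1
  set φ : E2 → ℝ := fun x => K * ((hbar - G x) + (inner ℝ (x - y) (x - y) : ℝ)) with hφdef
  have hφsmooth : ContDiff ℝ 1 φ := by
    apply ContDiff.mul contDiff_const
    exact (contDiff_const.sub hGsmooth).add
      (ContDiff.inner ℝ (contDiff_id.sub contDiff_const) (contDiff_id.sub contDiff_const))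
  have hφy : φ y = 0 := by
    have hGy : G y = H y := hGH y (mem_closedBall_self (by linarith))
    simp [hφdef, hGy, hyH]
  have hφ0 : ∀ x ∈ S, K * ‖x - y‖^2 ≤ φ x := by
    intro x hx
    have h1 : 0 ≤ hbar - H x := sub_nonneg.mpr (hSH x hx)
    have h2 : G x = H x := hGH x (ball_subset_closedBall (hSballρV hx))
    have h3 : (inner ℝ (x - y) (x - y) : ℝ) = ‖x - y‖^2 := real_inner_self_eq_norm_sq _
    rw [hφdef]
    simp only [h2, h3]
    nlinarith [hK0]
  have hφnn : ∀ x ∈ S, 0 ≤ φ x := fun x hx =>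
    le_trans (by positivity) (hφ0 x hx)
  -- maximize u - φ on S
  have husc : UpperSemicontinuousOn (fun x => u x - φ x) S := by
    have h1 : UpperSemicontinuousOn u S := hu.mono inter_subset_left
    have h2 : UpperSemicontinuousOn (fun x => -φ x) S :=
      ((hφsmooth.continuous.neg).continuousOn).upperSemicontinuousOn
    simpa [sub_eq_add_neg] using h1.add h2
  obtain ⟨z, hzS, hzmax⟩ := usc_exists_max hScomp ⟨y, hyS⟩ husc
  have hyz : u y ≤ u z - φ z := by
    have := hzmax y hyS
    rwa [hφy, sub_zero] at this
  have huzy : u y ≤ u z := le_trans hyz (by linarith [hφnn z hzS])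
  have hzny : ‖z - y‖ < m := by
    have hφz := hφ0 z hzS
    have hKz : K * ‖z - y‖^2 ≤ 2*C := by
      have hc1 := abs_le.mp (hC z hzS.1)
      have hc2 := abs_le.mp (hC y hyc)
      linarith [hyz]
    by_contra h
    push_neg at h
    have hsq : m^2 ≤ ‖z - y‖^2 := by nlinarith
    have h1 : K * m^2 ≤ K * ‖z - y‖^2 := mul_le_mul_of_nonneg_left hsq hK0.le
    have h5 : (0:ℝ) < m^2 := by positivity
    have h3 : (2*C/m^2 + 1) * m^2 ≤ K * m^2 := mul_le_mul_of_nonneg_right hK1 h5.le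
    have h4 : (2*C/m^2 + 1) * m^2 = 2*C + m^2 := by field_simp
    linarith
  have hzball : z ∈ ball y ρ₀ := by
    rw [mem_ball, dist_eq_norm]
    exact lt_of_lt_of_le hzny (min_le_left _ _)
  -- local max on closure Ω
  have hmaxcl : IsLocalMaxOn (fun x => u x - φ x) (closure Ω) z := by
    have hball : ∀ᶠ x in 𝓝[closure Ω] z, x ∈ ball y ρ₀ :=
      eventually_nhdsWithin_of_eventually_nhds (isOpen_ball.eventually_mem hzball)
    have hmem : ∀ᶠ x in 𝓝[closure Ω] z, x ∈ closure Ω := eventually_mem_nhdsWithin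
    filter_upwards [hball, hmem] with x hx1 hx2
    exact hzmax x ⟨hx2, ball_subset_closedBall hx1⟩
  -- the PDE expression is positive at z
  have hzρV : z ∈ ball y (ρV/2) := hSballρV hzS
  have hGdiff : DifferentiableAt ℝ G z := (hGsmooth.differentiable one_ne_zero).differentiableAt
  have hgradφ : gradient φ z = K • (-(gradient H z) + (2:ℝ) • (z - y)) := by
    rw [hφdef, gradient_formula K hbar G y z hGdiff, hgradGH z hzρV]
  have horth : (inner ℝ (hamVF H z) (gradient H z) : ℝ) = 0 := by
    rw [real_inner_comm, inner_gradient_eq, hamVF_orth]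
  have hinner : (inner ℝ (hamVF H z) (gradient φ z) : ℝ)
      = K * (2 * (inner ℝ (hamVF H z) (z - y) : ℝ)) := by
    rw [hgradφ, real_inner_smul_right, inner_add_right, inner_neg_right,
      real_inner_smul_right, horth]
    ring
  have hzT : z ∈ T := ⟨hzS.1, closedBall_subset_closedBall hρ₀t0 hzS.2⟩
  have hbz : ‖hamVF H z‖ ≤ B := hBbd z hzT
  have hzyρ : ‖z - y‖ ≤ ρ₀ := by
    rw [← dist_eq_norm]; exact hzS.2
  have hinnabs : |(inner ℝ (hamVF H z) (z - y) : ℝ)| ≤ B * ρ₀ := by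
    refine le_trans (abs_real_inner_le_norm _ _) ?_
    exact mul_le_mul hbz hzyρ (norm_nonneg _) hB0
  have hgradz : c ≤ ‖gradient H z‖ := hcgrad z ⟨hSballr hzS, hzS.1⟩
  have hnormφ : K * (3*c/4) ≤ ‖gradient φ z‖ := by
    rw [hgradφ, norm_smul, Real.norm_eq_abs, abs_of_pos hK0]
    have h1 : ‖(2:ℝ) • (z - y)‖ ≤ 2*ρ₀ := by
      rw [norm_smul, Real.norm_eq_abs]
      have : |(2:ℝ)| = 2 := by norm_num
      rw [this]; linarith
    have h2 : -(gradient H z) + (2:ℝ) • (z - y)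
        = -(gradient H z - (2:ℝ) • (z - y)) := by abel
    have h3 : ‖gradient H z‖ - ‖(2:ℝ) • (z - y)‖ ≤ ‖gradient H z - (2:ℝ) • (z - y)‖ :=
      norm_sub_norm_le _ _
    rw [h2, norm_neg]
    have h4 : 3*c/4 ≤ ‖gradient H z - (2:ℝ) • (z - y)‖ := by linarith
    nlinarith
  have hinnbound : ep⁻¹ * (inner ℝ (hamVF H z) (gradient φ z) : ℝ) ≤ K * (ν*c/4) := by
    rw [hinner]
    have habs := (abs_le.mp hinnabs).2
    have hBρ : 2 * (B * ρ₀) ≤ 2 * (B * (ep*ν*c/(8*(B+1)))) := by nlinarith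
    have key1 : ep⁻¹ * (2 * (B * (ep*ν*c/(8*(B+1))))) ≤ ν*c/4 := by
      rw [show ep⁻¹ * (2 * (B * (ep*ν*c/(8*(B+1))))) = (ν*c/4) * (B/(B+1)) by
        field_simp; ring]
      have hb1 : B/(B+1) ≤ 1 := (div_le_one (by linarith)).mpr (by linarith)
      exact mul_le_of_le_one_right (by positivity) hb1
    have h5 : ep⁻¹ * (2 * (inner ℝ (hamVF H z) (z - y) : ℝ)) ≤ ν*c/4 := by
      have h6 : ep⁻¹ * (2 * (inner ℝ (hamVF H z) (z - y) : ℝ)) ≤ ep⁻¹ * (2 * (B * ρ₀)) := by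
        have := inv_pos.mpr hep
        nlinarith
      have h7 : ep⁻¹ * (2 * (B * ρ₀)) ≤ ep⁻¹ * (2 * (B * (ep*ν*c/(8*(B+1))))) := by
        have := inv_pos.mpr hep
        nlinarith
      linarith
    have h8 : ep⁻¹ * (K * (2 * (inner ℝ (hamVF H z) (z - y) : ℝ)))
        = K * (ep⁻¹ * (2 * (inner ℝ (hamVF H z) (z - y) : ℝ))) := by ring
    rw [h8]
    exact mul_le_mul_of_nonneg_left h5 hK0.le
  have huzC : -C ≤ u z := by
    have := (abs_le.mp (hC z hzS.1)).1
    linarith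
  have hKnuc : 4*(M + lam*C) + ν*c ≤ K*(ν*c) := by
    have h1 : (4*(M + lam*C)/(ν*c) + 1) * (ν*c) ≤ K * (ν*c) :=
      mul_le_mul_of_nonneg_right hK2 (by positivity)
    have h2 : (4*(M + lam*C)/(ν*c) + 1) * (ν*c) = 4*(M + lam*C) + ν*c := by
      field_simp
    linarith
  have hPpos : 0 < lam * u z - ep⁻¹ * (inner ℝ (hamVF H z) (gradient φ z) : ℝ)
      + ν * ‖gradient φ z‖ - M := by
    have h1 : ν * (K * (3*c/4)) ≤ ν * ‖gradient φ z‖ :=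
      mul_le_mul_of_nonneg_left hnormφ hν.le
    have h2 : lam * (-C) ≤ lam * u z := mul_le_mul_of_nonneg_left huzC hlam.le
    have e1 : ν * (K * (3*c/4)) = 3/4*(K*(ν*c)) := by ring
    have e2 : K * (ν*c/4) = 1/4*(K*(ν*c)) := by ring
    have hlC : 0 ≤ lam * C := mul_nonneg hlam.le hC0
    have hνc : 0 < ν * c := mul_pos hν hc
    linarith [hinnbound, h1, h2, hKnuc, e1, e2]
  by_cases hzΩ : z ∈ Ω
  · exact absurd (husub φ hφsmooth z hzΩ (hmaxcl.on_subset subset_closure)) (by linarith)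
  · have hzfr : z ∈ frontier Ω := by
      rw [hΩopen.frontier_eq]
      exact ⟨hzS.1, hzΩ⟩
    have hmin := hubc φ hφsmooth z hzfr hmaxcl
    have hug : u z ≤ g z := by
      rcases min_le_iff.mp hmin with h | h
      · linarith
      · linarith
    have hdz : dist z y < s := by
      rw [dist_eq_norm]
      exact lt_of_lt_of_le hzny (min_le_right _ _)
    have hgz := hgs hzfr hdz
    rw [Real.dist_eq] at hgz
    have := (abs_lt.mp hgz).2
    linarith
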